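/- Let M be a finitely generated abelian group. Then every unit u of the integral group ring Z[M] such that the image of u in Z[M]^∧_p satisfies δ_p(u)=0 for every prime p (with respect to the δ_p-structure with Frobenius lift [m] ↦ [pm]) is of the form [m] for some m ∈ M. Equivalently, the group of such units is isomorphic to M. -/

import Mathlib

/-- Multiplication by `q` as an additive monoid homomorphism. -/
def pMul (q : ℕ) (M : Type*) [AddCommGroup M] : M →+ M :=
  AddMonoidHom.mk' (fun m => q • m) (fun a b => smul_add q a b)

/-- For a prime `q`, the Frobenius lift `Σ a_m[m] ↦ Σ a_m[q•m]` on the integral group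
ring `ℤ[M]`. -/
noncomputable def frobLift (q : ℕ) (M : Type*) [AddCommGroup M] :
    AddMonoidAlgebra ℤ M →+* AddMonoidAlgebra ℤ M :=
  AddMonoidAlgebra.mapDomainRingHom ℤ (pMul q M)


section Basic

variable {M : Type*} [AddCommGroup M]

lemma frobLift_apply (q : ℕ) (x : AddMonoidAlgebra ℤ M) :
    (frobLift q M x).coeff = Finsupp.mapDomain (fun m => q • m) x.coeff := rfl

lemma frobLift_apply' (q : ℕ) (x : AddMonoidAlgebra ℤ M) :
    frobLift q M x = AddMonoidAlgebra.mapDomain (fun m => q • m) x := rfl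

lemma frobLift_frobLift (a b : ℕ) (x : AddMonoidAlgebra ℤ M) :
    frobLift a M (frobLift b M x) = frobLift (a * b) M x := by
  apply AddMonoidAlgebra.coeff_injective
  rw [frobLift_apply, frobLift_apply, frobLift_apply, ← Finsupp.mapDomain_comp]
  congr 1
  funext m
  simp [Function.comp, smul_smul, mul_comm]

lemma frobLift_one_apply (x : AddMonoidAlgebra ℤ M) : frobLift 1 M x = x := by
  apply AddMonoidAlgebra.coeff_injective
  rw [frobLift_apply]
  have : (fun m : M => (1 : ℕ) • m) = id := by funext m; simp
  rw [this, Finsupp.mapDomain_id]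

lemma frobLift_pow_all (x : AddMonoidAlgebra ℤ M)
    (h : ∀ q : ℕ, q.Prime → frobLift q M x = x ^ q) :
    ∀ n : ℕ, 1 ≤ n → frobLift n M x = x ^ n := by
  intro n
  induction n using Nat.strong_induction_on with
  | _ n ih =>
    intro h1
    rcases eq_or_lt_of_le h1 with h1'|h2
    · rw [← h1', frobLift_one_apply, pow_one]
    · obtain ⟨p, hp, m, rfl⟩ : ∃ p, p.Prime ∧ ∃ m, n = p * m := by
        obtain ⟨p, hp, hd⟩ := Nat.exists_prime_and_dvd (by omega : n ≠ 1)
        exact ⟨p, hp, hd⟩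
      have hp2 := hp.two_le
      have hm1 : 1 ≤ m := by
        rcases Nat.eq_zero_or_pos m with rfl|h
        · simp at h2
        · exact h
      have hmlt : m < p * m := by nlinarith
      rw [← frobLift_frobLift, ih m hmlt hm1, map_pow, h p hp, ← pow_mul, mul_comm]

end Basic


section Aux
variable {M : Type*} [AddCommGroup M]

/-- The antipode `[m] ↦ [-m]`. -/
noncomputable def invol (M : Type*) [AddCommGroup M] :
    AddMonoidAlgebra ℤ M →+* AddMonoidAlgebra ℤ M :=
  AddMonoidAlgebra.mapDomainRingHom ℤ (AddEquiv.neg M)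

lemma invol_apply (x : AddMonoidAlgebra ℤ M) :
    (invol M x).coeff = Finsupp.mapDomain (fun m => -m) x.coeff := rfl

lemma invol_apply' (x : AddMonoidAlgebra ℤ M) :
    invol M x = AddMonoidAlgebra.mapDomain (fun m => -m) x := rfl

lemma invol_invol (x : AddMonoidAlgebra ℤ M) : invol M (invol M x) = x := by
  apply AddMonoidAlgebra.coeff_injective
  rw [invol_apply, invol_apply, ← Finsupp.mapDomain_comp]
  have : ((fun m : M => -m) ∘ fun m : M => -m) = id := by funext m; simp
  rw [this, Finsupp.mapDomain_id]

/-- The augmentation map. -/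
noncomputable def aug (M : Type*) [AddCommGroup M] : AddMonoidAlgebra ℤ M →+* ℤ :=
  AddMonoidAlgebra.liftNCRingHom (RingHom.id ℤ) 1 (fun _ _ => Commute.one_right _)

lemma aug_single (a : M) (b : ℤ) : aug M (AddMonoidAlgebra.single a b) = b := by
  unfold aug AddMonoidAlgebra.liftNCRingHom
  show AddMonoidAlgebra.liftNC _ _ _ = b
  rw [AddMonoidAlgebra.liftNC_single]
  simp

lemma aug_apply (x : AddMonoidAlgebra ℤ M) : aug M x = x.coeff.sum fun _ b => b := by
  induction x using AddMonoidAlgebra.induction_linear with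
  | zero => simp
  | add f g hf hg =>
      rw [map_add, hf, hg, AddMonoidAlgebra.coeff_add,
        Finsupp.sum_add_index' (fun a => rfl) (fun a b₁ b₂ => rfl)]
  | single a b => rw [aug_single, AddMonoidAlgebra.coeff_single, Finsupp.sum_single_index rfl]

lemma aug_mapDomain (f : M → M) (x : AddMonoidAlgebra ℤ M) :
    aug M (AddMonoidAlgebra.mapDomain f x) = aug M x := by
  rw [aug_apply, aug_apply]
  exact Finsupp.sum_mapDomain_index (fun _ => rfl) (fun _ _ _ => rfl)

/-- inner product: the coefficient at `0` of `x * invol y`. -/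
lemma ip (x y : AddMonoidAlgebra ℤ M) :
    (x * invol M y).coeff 0 = y.coeff.sum fun a b => x.coeff a * b := by
  induction y using AddMonoidAlgebra.induction_linear with
  | zero => simp
  | add f g hf hg =>
      rw [map_add, mul_add, AddMonoidAlgebra.coeff_add, Finsupp.add_apply, hf, hg,
        AddMonoidAlgebra.coeff_add,
        Finsupp.sum_add_index' (fun a => by simp) (fun a b₁ b₂ => by ring)]
  | single a b =>
      rw [invol_apply', AddMonoidAlgebra.mapDomain_single, AddMonoidAlgebra.coeff_mul_single_apply,
        AddMonoidAlgebra.coeff_single, Finsupp.sum_single_index (by simp), zero_add, neg_neg]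

end Aux

section Key
variable {Q : Type*} [AddCommGroup Q]

lemma frob_exp (e : ℕ) (hexp : ∀ c : Q, e • c = 0) (y : AddMonoidAlgebra ℤ Q) :
    frobLift e Q y = AddMonoidAlgebra.single 0 (aug Q y) := by
  apply AddMonoidAlgebra.coeff_injective
  rw [frobLift_apply, aug_apply]
  have h1 : (fun m : Q => e • m) = fun _ => (0 : Q) := funext hexp
  rw [h1]
  rw [Finsupp.mapDomain]
  have h2 : (Finsupp.singleAddHom (0:Q) : ℤ →+ (Q →₀ ℤ)) (y.coeff.sum fun _ b => b)
      = y.coeff.sum fun _ b => (Finsupp.singleAddHom (0:Q) : ℤ →+ (Q →₀ ℤ)) b :=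
    map_finsuppSum _ y.coeff _
  simpa using h2.symm

lemma sum_sq_pos (y : AddMonoidAlgebra ℤ Q) (hy : y ≠ 0) :
    1 ≤ y.coeff.sum fun a b => y.coeff a * b := by
  obtain ⟨a₀, ha₀⟩ := Finsupp.ne_iff.mp (by simpa using hy : y.coeff ≠ 0)
  simp only [Finsupp.coe_zero, Pi.zero_apply] at ha₀
  have hmem : a₀ ∈ y.coeff.support := Finsupp.mem_support_iff.mpr ha₀
  have hterm : 1 ≤ y.coeff a₀ * y.coeff a₀ := by
    have := mul_self_pos.mpr ha₀
    omega
  calc (1:ℤ) ≤ y.coeff a₀ * y.coeff a₀ := hterm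
    _ ≤ y.coeff.sum fun a b => y.coeff a * b := by
        rw [Finsupp.sum]
        exact Finset.single_le_sum (fun i _ => mul_self_nonneg (y.coeff i)) hmem

lemma key (e : ℕ) (he : 2 ≤ e) (hexp : ∀ c : Q, e • c = 0)
    (u : (AddMonoidAlgebra ℤ Q)ˣ)
    (h2 : frobLift 2 Q ↑u = (↑u : AddMonoidAlgebra ℤ Q) ^ 2)
    (hE : frobLift e Q ↑u = (↑u : AddMonoidAlgebra ℤ Q) ^ e) :
    ∃ m : Q, (↑u : AddMonoidAlgebra ℤ Q) = AddMonoidAlgebra.single m 1 := by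
  set x : AddMonoidAlgebra ℤ Q := ↑u with hxdef
  -- augmentation is 1
  have haug : aug Q x = 1 := by
    have h0 : aug Q x = aug Q (x ^ 2) := by
      have := congrArg (aug Q) h2
      rwa [frobLift_apply', aug_mapDomain] at this
    have h1 : aug Q x = aug Q x * aug Q x := by
      conv_lhs => rw [h0, map_pow]
      ring
    have hne : aug Q x ≠ 0 := by
      intro hz
      have hone : aug Q x * aug Q ((↑u⁻¹ : AddMonoidAlgebra ℤ Q)) = 1 := by
        rw [← map_mul, Units.mul_inv, map_one]
      rw [hz, zero_mul] at hone
      exact one_ne_zero hone.symm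
    have h4 : aug Q x * 1 = aug Q x * aug Q x := by rw [mul_one]; exact h1
    exact (mul_left_cancel₀ hne h4).symm
  -- x ^ e = 1
  have hxe : x ^ e = 1 := by
    rw [← hE, frob_exp e hexp, haug, AddMonoidAlgebra.one_def]
  -- w and its properties
  set w : AddMonoidAlgebra ℤ Q := x * invol Q x with hwdef
  have hinvol_pow : ∀ k : ℕ, (invol Q x) ^ k = invol Q (x ^ k) := fun k => (map_pow _ _ _).symm
  have hwk : ∀ k : ℕ, w ^ k = x ^ k * invol Q (x ^ k) := by
    intro k
    rw [hwdef, mul_pow, hinvol_pow]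
  have hwe : w ^ e = 1 := by
    rw [hwk, hxe, map_one, mul_one]
  -- B
  set B : AddMonoidAlgebra ℤ Q := ∑ k ∈ Finset.range e, w ^ k with hBdef
  have hBw : B * w = B := by
    have h1 : B * w = ∑ k ∈ Finset.range e, w ^ (k + 1) := by
      rw [hBdef, Finset.sum_mul]
      exact Finset.sum_congr rfl fun k _ => (pow_succ w k).symm
    have h2' : B + w ^ e = w ^ 0 + ∑ k ∈ Finset.range e, w ^ (k + 1) := by
      rw [hBdef, ← Finset.sum_range_succ, Finset.sum_range_succ']
      ring
    rw [hwe, pow_zero] at h2'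
    have := h2'.symm
    rw [← h1] at this
    linear_combination this
  have hBwk : ∀ k : ℕ, B * w ^ k = B := by
    intro k
    induction k with
    | zero => simp
    | succ n ihn => rw [pow_succ, ← mul_assoc, ihn, hBw]
  have hBB : B * B = e • B := by
    calc B * B = ∑ k ∈ Finset.range e, B * w ^ k := by rw [hBdef, Finset.mul_sum]
      _ = ∑ _k ∈ Finset.range e, B := Finset.sum_congr rfl fun k _ => hBwk k
      _ = e • B := by rw [Finset.sum_const, Finset.card_range]
  -- symmetry of B
  have hσw : invol Q w = w := by
    rw [hwdef, map_mul, invol_invol, mul_comm]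
  have hσB : invol Q B = B := by
    rw [hBdef, map_sum]
    exact Finset.sum_congr rfl fun k _ => by rw [map_pow, hσw]
  -- coefficient computations
  have hdiag : ∀ k : ℕ, (w ^ k).coeff 0 = (x ^ k).coeff.sum fun a b => (x ^ k).coeff a * b := by
    intro k
    rw [hwk k]
    exact ip _ _
  have hdiag_pos : ∀ k : ℕ, 1 ≤ (w ^ k).coeff 0 := by
    intro k
    rw [hdiag]
    refine sum_sq_pos _ ?_
    have : x ^ k = ((u ^ k : (AddMonoidAlgebra ℤ Q)ˣ) : AddMonoidAlgebra ℤ Q) := by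
      rw [Units.val_pow_eq_pow_val]
    rw [this]
    exact Units.ne_zero _
  have hB0 : B.coeff 0 = ∑ k ∈ Finset.range e, (w ^ k).coeff 0 := by
    rw [hBdef, AddMonoidAlgebra.coeff_sum, Finset.sum_apply']
  have hB0_ge : (e : ℤ) ≤ B.coeff 0 := by
    rw [hB0]
    calc (e : ℤ) = ∑ _k ∈ Finset.range e, (1 : ℤ) := by
          rw [Finset.sum_const, Finset.card_range]; simp
      _ ≤ _ := Finset.sum_le_sum fun k _ => hdiag_pos k
  have hB0_pos : (0 : ℤ) < B.coeff 0 := lt_of_lt_of_le (by positivity) hB0_ge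
  have hBB0 : (B * B).coeff 0 = B.coeff.sum fun a b => B.coeff a * b := by
    have := ip B B
    rwa [hσB] at this
  have hsq : B.coeff 0 * B.coeff 0 ≤ (e : ℤ) * B.coeff 0 := by
    have h1 : B.coeff 0 * B.coeff 0 ≤ B.coeff.sum fun a b => B.coeff a * b := by
      rw [Finsupp.sum]
      have hmem : (0 : Q) ∈ B.coeff.support := Finsupp.mem_support_iff.mpr (by omega)
      exact Finset.single_le_sum (fun i _ => mul_self_nonneg (B.coeff i)) hmem
    have hBB' : B * B = (e : ℤ) • B := by rw [hBB, Nat.cast_smul_eq_nsmul]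
    have h2' : (B.coeff.sum fun a b => B.coeff a * b) = (e : ℤ) * B.coeff 0 := by
      rw [← hBB0, hBB', AddMonoidAlgebra.coeff_smul, Finsupp.smul_apply, smul_eq_mul]
    omega
  have hB0_le : B.coeff 0 ≤ (e : ℤ) := le_of_mul_le_mul_right (by rw [mul_comm]; exact hsq) hB0_pos
  have hB0_eq : B.coeff 0 = (e : ℤ) := le_antisymm hB0_le hB0_ge
  -- each (w^k) 0 = 1 for k in range e; in particular k = 1
  have hall1 : ∀ k ∈ Finset.range e, (w ^ k).coeff 0 = 1 := by
    have hsum : ∑ k ∈ Finset.range e, ((w ^ k).coeff 0 - 1) = 0 := by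
      rw [Finset.sum_sub_distrib, ← hB0, hB0_eq]
      simp
    intro k hk
    have := (Finset.sum_eq_zero_iff_of_nonneg
      (fun i _ => by have := hdiag_pos i; omega)).mp hsum k hk
    omega
  have hw1 : (w : AddMonoidAlgebra ℤ Q).coeff 0 = 1 := by
    have := hall1 1 (Finset.mem_range.mpr (by omega))
    rwa [pow_one] at this
  have hxsum : (x.coeff.sum fun a b => x.coeff a * b) = 1 := by
    have := hdiag 1
    rw [pow_one, pow_one] at this
    rw [← this, hw1]
  -- support of x is a singleton
  have hxne : x ≠ 0 := Units.ne_zero u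
  have hcard : x.coeff.support.card = 1 := by
    have hle : (x.coeff.support.card : ℤ) ≤ 1 := by
      calc (x.coeff.support.card : ℤ) = ∑ _a ∈ x.coeff.support, (1 : ℤ) := by
            rw [Finset.sum_const]; simp
        _ ≤ ∑ a ∈ x.coeff.support, x.coeff a * x.coeff a := Finset.sum_le_sum fun a ha => by
            have : x.coeff a ≠ 0 := Finsupp.mem_support_iff.mp ha
            have := mul_self_pos.mpr this
            omega
        _ = 1 := by rw [← hxsum]; rfl
    have hne : x.coeff.support.Nonempty := Finsupp.support_nonempty_iff.mpr (by simpa using hxne)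
    have := Finset.card_pos.mpr hne
    omega
  obtain ⟨m₀, hm₀⟩ := Finset.card_eq_one.mp hcard
  obtain ⟨hne0, hsingle⟩ := Finsupp.support_eq_singleton.mp hm₀
  have hsingle' : x = AddMonoidAlgebra.single m₀ (x.coeff m₀) := AddMonoidAlgebra.coeff_injective hsingle
  have hcoeff : x.coeff m₀ = 1 := by
    have := haug
    rw [hsingle', aug_single] at this
    exact this
  exact ⟨m₀, by rw [hsingle', hcoeff]⟩

end Key

section ResFin
open DirectSum

lemma exists_good_N {M : Type*} [AddCommGroup M] (hfg : AddGroup.FG M) (D : Finset M) :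
    ∃ N : ℕ, 2 ≤ N ∧ ∀ d ∈ D, d ≠ 0 → ∀ y : M, N • y ≠ d := by
  obtain ⟨n, ι, fι, p, hp, e, ⟨f⟩⟩ := AddCommGroup.equiv_free_prod_directSum_zmod M
  haveI : ∀ i, NeZero (p i ^ e i) := fun i => ⟨pow_ne_zero _ (hp i).ne_zero⟩
  haveI : Finite (⨁ i : ι, ZMod (p i ^ e i)) :=
    Finite.of_equiv _ (DFinsupp.equivFunOnFintype (ι := ι)).symm
  set c := Nat.card (⨁ i : ι, ZMod (p i ^ e i)) with hc
  have hc1 : 1 ≤ c := Nat.card_pos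
  set K := 1 + D.sup (fun d => ((f d).1.support.sup fun i => ((f d).1 i).natAbs)) with hK
  have hK1 : 1 ≤ K := by omega
  have hKbound : ∀ d ∈ D, ∀ i, ((f d).1 i).natAbs < K := by
    intro d hd i
    by_cases hi : i ∈ (f d).1.support
    · have h1 : ((f d).1 i).natAbs ≤ (f d).1.support.sup (fun i => ((f d).1 i).natAbs) :=
        Finset.le_sup (f := fun i => ((f d).1 i).natAbs) hi
      have h2 : (f d).1.support.sup (fun i => ((f d).1 i).natAbs)
          ≤ D.sup (fun d => ((f d).1.support.sup fun i => ((f d).1 i).natAbs)) :=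
        Finset.le_sup (f := fun d => ((f d).1.support.sup fun i => ((f d).1 i).natAbs)) hd
      omega
    · rw [Finsupp.notMem_support_iff.mp hi]
      simpa using (show 0 < K by omega)
  refine ⟨2 * K * c, by nlinarith, ?_⟩
  intro d hd hd0 y hy
  have hf : (2 * K * c) • f y = f d := by rw [← map_nsmul, hy]
  have hfst : (2 * K * c) • (f y).1 = (f d).1 := by
    have h := congrArg (AddMonoidHom.fst (Fin n →₀ ℤ) (⨁ i : ι, ZMod (p i ^ e i))) hf
    rw [map_nsmul] at h
    exact h
  have hsnd : (2 * K * c) • (f y).2 = (f d).2 := by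
    have h := congrArg (AddMonoidHom.snd (Fin n →₀ ℤ) (⨁ i : ι, ZMod (p i ^ e i))) hf
    rw [map_nsmul] at h
    exact h
  by_cases hfd : (f d).1 = 0
  · have hsnd0 : (f d).2 = 0 := by
      rw [← hsnd, show 2 * K * c = 2 * K * c from rfl, mul_smul]
      rw [hc, card_nsmul_eq_zero', smul_zero]
    have : f d = 0 := Prod.ext hfd hsnd0
    exact hd0 (by simpa using f.injective (by rw [this, map_zero]))
  · obtain ⟨i, hi⟩ := Finsupp.ne_iff.mp hfd
    simp only [Finsupp.coe_zero, Pi.zero_apply] at hi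
    have hcoord : (2 * K * c) • ((f y).1 i) = (f d).1 i := by
      have h := congrArg (Finsupp.applyAddHom (M := ℤ) i) hfst
      rw [map_nsmul] at h
      exact h
    rw [nsmul_eq_mul] at hcoord
    have hz : (f y).1 i ≠ 0 := by
      intro h0
      rw [h0, mul_zero] at hcoord
      exact hi hcoord.symm
    have habs : 2 * K * c * ((f y).1 i).natAbs = ((f d).1 i).natAbs := by
      rw [← hcoord, Int.natAbs_mul, Int.natAbs_natCast]
    have hz1 : 1 ≤ ((f y).1 i).natAbs := by
      rcases Nat.eq_zero_or_pos ((f y).1 i).natAbs with h0|h0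
      · exact absurd (Int.natAbs_eq_zero.mp h0) hz
      · exact h0
    have hKb := hKbound d hd i
    have h5 : 2 * K * c ≤ 2 * K * c * ((f y).1 i).natAbs :=
      Nat.le_mul_of_pos_right _ (by omega)
    have h6 : K ≤ 2 * K * c := by nlinarith
    have h7 : K ≤ ((f d).1 i).natAbs := le_trans h6 (le_trans h5 (le_of_eq habs))
    omega

end ResFin

section Push
variable {M M' : Type*} [AddCommGroup M] [AddCommGroup M']

lemma push_frob (g : M →+ M') (n : ℕ) (z : AddMonoidAlgebra ℤ M) :
    AddMonoidAlgebra.mapDomainRingHom ℤ g (frobLift n M z)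
      = frobLift n M' (AddMonoidAlgebra.mapDomainRingHom ℤ g z) := by
  apply AddMonoidAlgebra.coeff_injective
  show Finsupp.mapDomain g (Finsupp.mapDomain (fun m => n • m) z.coeff)
      = Finsupp.mapDomain (fun m => n • m) (Finsupp.mapDomain g z.coeff)
  rw [← Finsupp.mapDomain_comp, ← Finsupp.mapDomain_comp]
  congr 1
  funext m
  simp [Function.comp, map_nsmul]

end Push


/-- Let `M` be a finitely generated abelian group.  Every unit `u` of `ℤ[M]` whose image
in each `p`-completion `ℤ[M]^∧_p` is killed by `δ_p` — equivalently (since these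
completions are `p`-torsion free), `φ_p(u) = u^p` for every prime `p`, where `φ_p` is
the Frobenius lift `[m] ↦ [p•m]` — is of the form `[m]` for a unique `m ∈ M`.
Equivalently, the group of such units is isomorphic to `M`. -/
theorem rankOneHatDeltaUnits_eq_group {M : Type*} [AddCommGroup M] (hfg : AddGroup.FG M) :
    ∀ u : (AddMonoidAlgebra ℤ M)ˣ,
      (∀ q : ℕ, q.Prime →
        frobLift q M (u : AddMonoidAlgebra ℤ M) = (u : AddMonoidAlgebra ℤ M) ^ q) →
      ∃! m : M, (u : AddMonoidAlgebra ℤ M) = AddMonoidAlgebra.single m 1 := by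
  classical
  intro u hu
  set x : AddMonoidAlgebra ℤ M := ↑u with hxdef
  have hall := frobLift_pow_all x hu
  obtain ⟨N, hN2, hN⟩ := exists_good_N hfg ((x.coeff.support ×ˢ x.coeff.support).image fun p => p.1 - p.2)
  set H := (pMul N M).range with hH
  set qm : M →+ M ⧸ H := QuotientAddGroup.mk' H with hqm
  have hqinj : Set.InjOn qm x.coeff.support := by
    intro a ha b hb hab
    by_contra hne
    have hmem : a - b ∈ H := QuotientAddGroup.eq_iff_sub_mem.mp hab
    obtain ⟨y, hy⟩ := hmem
    refine hN (a - b) ?_ (sub_ne_zero.mpr hne) y hy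
    exact Finset.mem_image.mpr ⟨(a, b), Finset.mem_product.mpr ⟨ha, hb⟩, rfl⟩
  set push := AddMonoidAlgebra.mapDomainRingHom ℤ qm with hpush
  have hv : ∀ n : ℕ, 1 ≤ n → frobLift n (M ⧸ H) (push x) = (push x) ^ n := by
    intro n hn
    rw [← push_frob, hall n hn, map_pow]
  have hexp : ∀ cQ : M ⧸ H, N • cQ = 0 := by
    intro cQ
    induction cQ using QuotientAddGroup.induction_on with
    | H m =>
        show N • qm m = 0
        rw [← map_nsmul]
        exact (QuotientAddGroup.eq_zero_iff _).mpr ⟨m, rfl⟩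
  let v : (AddMonoidAlgebra ℤ (M ⧸ H))ˣ := Units.map push.toMonoidHom u
  have hvx : (↑v : AddMonoidAlgebra ℤ (M ⧸ H)) = push x := rfl
  obtain ⟨mb, hmb⟩ := key N hN2 hexp v
    (by rw [hvx]; exact hv 2 one_le_two) (by rw [hvx]; exact hv N (by omega))
  rw [hvx] at hmb
  have hsupp : (push x).coeff.support = x.coeff.support.image qm :=
    Finsupp.mapDomain_support_of_injOn x.coeff hqinj
  have hxne : x ≠ 0 := Units.ne_zero u
  obtain ⟨m₀, hm₀⟩ := Finsupp.support_nonempty_iff.mpr (by simpa using hxne : x.coeff ≠ 0)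
  have himg : x.coeff.support.image qm = {mb} := by
    rw [← hsupp, hmb]
    exact Finsupp.support_single_ne_zero _ one_ne_zero
  have hsub : x.coeff.support = {m₀} := by
    apply Finset.eq_singleton_iff_unique_mem.mpr
    refine ⟨hm₀, fun a ha => ?_⟩
    apply hqinj ha hm₀
    have h1 : qm a ∈ ({mb} : Finset (M ⧸ H)) := himg ▸ Finset.mem_image_of_mem qm ha
    have h2 : qm m₀ ∈ ({mb} : Finset (M ⧸ H)) := himg ▸ Finset.mem_image_of_mem qm hm₀
    rw [Finset.mem_singleton.mp h1, Finset.mem_singleton.mp h2]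
  obtain ⟨hne0, hsingle⟩ := Finsupp.support_eq_singleton.mp hsub
  have hqm₀ : qm m₀ = mb := by
    have := himg ▸ Finset.mem_image_of_mem qm hm₀
    exact Finset.mem_singleton.mp this
  have hval : x.coeff m₀ = 1 := by
    have h1 : (push x).coeff (qm m₀) = x.coeff m₀ :=
      Finsupp.mapDomain_apply' (↑x.coeff.support) x.coeff (by simp) hqinj (by exact hm₀)
    rw [hmb, hqm₀, AddMonoidAlgebra.coeff_single, Finsupp.single_eq_same] at h1
    exact h1.symm
  refine ⟨m₀, ?_, ?_⟩
  · show x = AddMonoidAlgebra.single m₀ 1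
    apply AddMonoidAlgebra.coeff_injective
    rw [hsingle, hval, AddMonoidAlgebra.coeff_single]
  · intro m' hm'
    have h0 : x = AddMonoidAlgebra.single m₀ (1:ℤ) := AddMonoidAlgebra.coeff_injective (by
      rw [hsingle, hval, AddMonoidAlgebra.coeff_single])
    have h1 : (AddMonoidAlgebra.single m' (1:ℤ) : AddMonoidAlgebra ℤ M) = AddMonoidAlgebra.single m₀ 1 :=
      hm'.symm.trans h0
    exact AddMonoidAlgebra.single_left_injective one_ne_zero h1
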